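/- arXiv:2309.08850 — 5 statements merged into one kernel-verified Lean document; each statement's English description precedes it below -/
import Mathlib

section
/- For every index i with 1 ≤ i ≤ N the following identity holds in ℂ: Σ_{v : {1,…,N} → {1,…,L}} det(B_v) · F(v, i) + Σ_{j=1}^{M} B_{N+j, i} · ( Σ_{v : {1,…,N} → {1,…,L}} det(B_v) · F(v, N+j) ) = 0, where the sums run over all maps v (not only injective ones), and (v, k) denotes the map {1,…,N+1} → {1,…,L} sending r ↦ v(r) for r ≤ N and N+1 ↦ k. (This determinantal identity is the algebraic content of Lemma 7.1: after expanding the tau function τ(t) = Σ_I B_I Δ_I^− e^{η_I} τ₀(t−[p_I]) it yields the relation τ(t−[p_i])e^{η_i} = −Σ_{j=1}^{M} b̃_{N+j,i} τ(t−[p_{N+j}])e^{η_{N+j}} for the wave function.) -/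
open Finset

/-- Auxiliary "permanent-like" sum. -/
noncomputable def auxP (N M : ℕ) (B : Matrix (Fin (N + M)) (Fin N) ℂ)
    (F : (Fin (N + 1) → Fin (N + M)) → ℂ) (k : Fin (N + M)) : ℂ :=
  ∑ v : Fin N → Fin (N + M), (∏ r, B (v r) r) * F (Fin.snoc v k)

lemma aux_snoc_comp_extend {α : Type*} {N : ℕ} (τ : Equiv.Perm (Fin N)) (v : Fin N → α) (k : α) :
    (Fin.snoc v k : Fin (N + 1) → α) ∘ (τ.extendDomain (finSuccAboveEquiv (Fin.last N)))
      = Fin.snoc (v ∘ τ) k := by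
  funext s
  induction s using Fin.lastCases with
  | last =>
      have h1 : (τ.extendDomain (finSuccAboveEquiv (Fin.last N))) (Fin.last N) = Fin.last N :=
        Equiv.Perm.extendDomain_apply_not_subtype _ _ (by simp)
      simp [h1]
  | cast r =>
      have h1 : (τ.extendDomain (finSuccAboveEquiv (Fin.last N))) (Fin.castSucc r)
          = Fin.castSucc (τ r) := by
        have h2 := Equiv.Perm.extendDomain_apply_image τ (finSuccAboveEquiv (Fin.last N)) r
        simpa [finSuccAboveEquiv_apply, Fin.succAbove_last] using h2
      simp [h1]

lemma aux_snoc_comp_swap {α : Type*} {N : ℕ} (i : Fin N) (v : Fin N → α) (k : α) :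
    (Fin.snoc v k : Fin (N + 1) → α) ∘ (Equiv.swap (Fin.castSucc i) (Fin.last N))
      = Fin.snoc (Function.update v i k) (v i) := by
  funext s
  induction s using Fin.lastCases with
  | last => simp [Equiv.swap_apply_right]
  | cast r =>
      rcases eq_or_ne r i with rfl | hr
      · simp [Equiv.swap_apply_left]
      · have h1 : Equiv.swap (Fin.castSucc i) (Fin.last N) (Fin.castSucc r) = Fin.castSucc r :=
          Equiv.swap_apply_of_ne_of_ne (by simpa [Fin.castSucc_inj] using hr)
            (Fin.castSucc_lt_last r).ne
        simp [h1, Function.update_of_ne hr]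

/-- Rewriting the determinantal sum via symmetrization. -/
lemma auxG_eq (N M : ℕ) (B : Matrix (Fin (N + M)) (Fin N) ℂ)
    (F : (Fin (N + 1) → Fin (N + M)) → ℂ)
    (hF : ∀ (w : Fin (N + 1) → Fin (N + M)) (σ : Equiv.Perm (Fin (N + 1))),
      F (w ∘ σ) = (Equiv.Perm.sign σ : ℤ) * F w)
    (k : Fin (N + M)) :
    (∑ v : Fin N → Fin (N + M),
        (Matrix.of fun r s : Fin N => B (v r) s).det * F (Fin.snoc v k))
      = (Fintype.card (Equiv.Perm (Fin N)) : ℂ) * auxP N M B F k := by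
  classical
  have step : ∀ τ : Equiv.Perm (Fin N),
      (∑ v : Fin N → Fin (N + M),
        ((Equiv.Perm.sign τ : ℤ) : ℂ) * (∏ r, B (v (τ r)) r) * F (Fin.snoc v k))
      = auxP N M B F k := by
    intro τ
    have hbij : Function.Bijective (fun v : Fin N → Fin (N + M) => v ∘ τ) := by
      constructor
      · intro a b h
        funext r
        have := congrFun h (τ.symm r)
        simpa using this
      · intro v
        exact ⟨v ∘ τ.symm, by funext r; simp⟩
    refine Fintype.sum_bijective _ hbij _ _ ?_
    intro v
    have h1 : (Fin.snoc (v ∘ τ) k : Fin (N + 1) → Fin (N + M))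
        = Fin.snoc v k ∘ (τ.extendDomain (finSuccAboveEquiv (Fin.last N))) :=
      (aux_snoc_comp_extend τ v k).symm
    have h2 : F (Fin.snoc (v ∘ τ) k)
        = ((Equiv.Perm.sign τ : ℤ) : ℂ) * F (Fin.snoc v k) := by
      rw [h1, hF, Equiv.Perm.sign_extendDomain]
    show _ = (∏ r, B ((v ∘ τ) r) r) * F (Fin.snoc (v ∘ τ) k)
    rw [h2]
    simp only [Function.comp_apply]
    ring
  calc (∑ v : Fin N → Fin (N + M),
        (Matrix.of fun r s : Fin N => B (v r) s).det * F (Fin.snoc v k))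
      = ∑ v : Fin N → Fin (N + M), (∑ τ : Equiv.Perm (Fin N),
          ((Equiv.Perm.sign τ : ℤ) : ℂ) * ∏ r, B (v (τ r)) r) * F (Fin.snoc v k) := by
        simp only [Matrix.det_apply', Matrix.of_apply]
    _ = ∑ v : Fin N → Fin (N + M), ∑ τ : Equiv.Perm (Fin N),
          ((Equiv.Perm.sign τ : ℤ) : ℂ) * (∏ r, B (v (τ r)) r) * F (Fin.snoc v k) := by
        simp only [Finset.sum_mul]
    _ = ∑ τ : Equiv.Perm (Fin N), ∑ v : Fin N → Fin (N + M),
          ((Equiv.Perm.sign τ : ℤ) : ℂ) * (∏ r, B (v (τ r)) r) * F (Fin.snoc v k) :=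
        Finset.sum_comm
    _ = ∑ _τ : Equiv.Perm (Fin N), auxP N M B F k :=
        Finset.sum_congr rfl fun τ _ => step τ
    _ = (Fintype.card (Equiv.Perm (Fin N)) : ℂ) * auxP N M B F k := by
        rw [Finset.sum_const, Finset.card_univ, nsmul_eq_mul]

/-- The pairing (involution) argument: the weighted sum of `auxP` vanishes. -/
lemma auxP_sum_eq_zero (N M : ℕ) (B : Matrix (Fin (N + M)) (Fin N) ℂ)
    (F : (Fin (N + 1) → Fin (N + M)) → ℂ)
    (hF : ∀ (w : Fin (N + 1) → Fin (N + M)) (σ : Equiv.Perm (Fin (N + 1))),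
      F (w ∘ σ) = (Equiv.Perm.sign σ : ℤ) * F w)
    (i : Fin N) :
    ∑ k : Fin (N + M), B k i * auxP N M B F k = 0 := by
  classical
  set f : Fin (N + M) × (Fin N → Fin (N + M)) → ℂ :=
    fun p => B p.1 i * ((∏ r, B (p.2 r) r) * F (Fin.snoc p.2 p.1)) with hf
  have hsum : ∑ k : Fin (N + M), B k i * auxP N M B F k
      = ∑ p : Fin (N + M) × (Fin N → Fin (N + M)), f p := by
    rw [Fintype.sum_prod_type]
    simp only [hf, auxP, Finset.mul_sum]
  set φ : Fin (N + M) × (Fin N → Fin (N + M)) → Fin (N + M) × (Fin N → Fin (N + M)) :=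
    fun p => (p.2 i, Function.update p.2 i p.1) with hφ
  have hinv : Function.Involutive φ := by
    intro p
    simp only [hφ, Function.update_self]
    ext1
    · rfl
    · funext r
      rcases eq_or_ne r i with rfl | hr
      · simp
      · simp [Function.update_of_ne hr]
  have hkey : ∀ p, f p = - f (φ p) := by
    rintro ⟨k, v⟩
    simp only [hf, hφ]
    have hsw : (Fin.snoc (Function.update v i k) (v i) : Fin (N + 1) → Fin (N + M))
        = Fin.snoc v k ∘ (Equiv.swap (Fin.castSucc i) (Fin.last N)) :=
      (aux_snoc_comp_swap i v k).symm
    have hne : (Fin.castSucc i : Fin (N + 1)) ≠ Fin.last N := (Fin.castSucc_lt_last i).ne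
    have hFsw : F (Fin.snoc (Function.update v i k) (v i)) = - F (Fin.snoc v k) := by
      rw [hsw, hF, Equiv.Perm.sign_swap hne]
      push_cast
      ring
    have hfun : (fun r => B (Function.update v i k r) r)
        = Function.update (fun r => B (v r) r) i (B k i) := by
      funext r
      rcases eq_or_ne r i with rfl | hr
      · simp
      · simp [Function.update_of_ne hr]
    have h1 : (∏ r, B (Function.update v i k r) r)
        = B k i * ∏ r ∈ Finset.univ.erase i, B (v r) r := by
      rw [hfun, Finset.prod_update_of_mem (Finset.mem_univ i)]
      rw [Finset.sdiff_singleton_eq_erase]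
    have h2 : (∏ r, B (v r) r)
        = B (v i) i * ∏ r ∈ Finset.univ.erase i, B (v r) r :=
      (Finset.mul_prod_erase _ _ (Finset.mem_univ i)).symm
    rw [hFsw, h1, h2]
    ring
  have hT : (∑ p, f p) = - ∑ p, f p := by
    calc (∑ p, f p) = ∑ p, - f (φ p) := Finset.sum_congr rfl fun p _ => hkey p
      _ = - ∑ p, f (φ p) := by rw [Finset.sum_neg_distrib]
      _ = - ∑ p, f p := by rw [Fintype.sum_bijective φ hinv.bijective (fun p => f (φ p)) f
            (fun p => rfl)]
  have : (∑ p, f p) + (∑ p, f p) = 0 := by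
    nth_rewrite 2 [hT]
    ring
  rw [hsum]
  exact add_self_eq_zero.mp this

/-!
The determinantal identity underlying Lemma 7.1: for an `L × N` matrix `B`
(`L = N + M`) whose upper `N × N` block is the identity, and any alternating
function `F` on maps `{1,…,N+1} → {1,…,L}`, for each column index `i ≤ N`:
`Σ_v det(B_v)·F(v,i) + Σ_j B_{N+j,i}·Σ_v det(B_v)·F(v,N+j) = 0`.
-/

theorem lemma_7_1_determinantal_identity (N M : ℕ) (hN : 1 ≤ N) (hM : 1 ≤ M)
    (B : Matrix (Fin (N + M)) (Fin N) ℂ)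
    (hB : ∀ i j : Fin N, B (Fin.castAdd M i) j = if i = j then 1 else 0)
    (F : (Fin (N + 1) → Fin (N + M)) → ℂ)
    (hF : ∀ (w : Fin (N + 1) → Fin (N + M)) (σ : Equiv.Perm (Fin (N + 1))),
      F (w ∘ σ) = (Equiv.Perm.sign σ : ℤ) * F w)
    (i : Fin N) :
    (∑ v : Fin N → Fin (N + M),
        (Matrix.of fun r s : Fin N => B (v r) s).det * F (Fin.snoc v (Fin.castAdd M i)))
      + ∑ j : Fin M, B (Fin.natAdd N j) i *
          ∑ v : Fin N → Fin (N + M),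
            (Matrix.of fun r s : Fin N => B (v r) s).det * F (Fin.snoc v (Fin.natAdd N j))
      = 0 := by
  classical
  set c : ℂ := (Fintype.card (Equiv.Perm (Fin N)) : ℂ) with hc
  have hrew := auxG_eq N M B F hF
  rw [hrew]
  have hjs : ∀ j : Fin M, B (Fin.natAdd N j) i *
      (∑ v : Fin N → Fin (N + M),
        (Matrix.of fun r s : Fin N => B (v r) s).det * F (Fin.snoc v (Fin.natAdd N j)))
      = c * (B (Fin.natAdd N j) i * auxP N M B F (Fin.natAdd N j)) := by
    intro j
    rw [hrew]
    ring
  rw [Finset.sum_congr rfl fun j _ => hjs j]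
  rw [← Finset.mul_sum, ← mul_add]
  have T0 := auxP_sum_eq_zero N M B F hF i
  rw [Fin.sum_univ_add] at T0
  have h1 : ∑ i' : Fin N, B (Fin.castAdd M i') i * auxP N M B F (Fin.castAdd M i')
      = auxP N M B F (Fin.castAdd M i) := by
    simp [hB, ite_mul]
  rw [h1] at T0
  rw [T0, mul_zero]
end

section
/- Assume that for every m ∈ {1,…,M} there exists φ_m ∈ W such that φ_m(q_l) = δ_{l,m} for all l ∈ {1,…,M} and φ_m(p_i) = −c_{m,i} for all i ∈ {1,…,N}. Then the stabilizer {f ∈ R : f·F ∈ W for all F ∈ W} is equal to {f ∈ R : for all i, j, if c_{j,i} ≠ 0 then f(p_i) = f(q_j)}. (Proposition 4.1) -/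
/-!
Proposition 4.1: the stabilizer of `W` in `R` equals
`{f ∈ R : f(p_i) = f(q_j) whenever c_{j,i} ≠ 0}`.
-/

theorem prop_4_1 {X : Type*} (N M : ℕ) (hN : 1 ≤ N) (hM : 1 ≤ M)
    (p : Fin N → X) (q : Fin M → X) (c : Fin M → Fin N → ℂ)
    (R : Subring (X → ℂ)) (H : Submodule ℂ (X → ℂ))
    (hRH : ∀ f ∈ R, ∀ F ∈ H, f * F ∈ H)
    (W : Set (X → ℂ))
    (hW : W = {F | F ∈ H ∧ ∀ i, F (p i) = -∑ j, c j i * F (q j)})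
    (φ : Fin M → (X → ℂ))
    (hφW : ∀ m, φ m ∈ W)
    (hφq : ∀ m l, φ m (q l) = if l = m then 1 else 0)
    (hφp : ∀ m i, φ m (p i) = -c m i) :
    {f | f ∈ R ∧ ∀ F ∈ W, f * F ∈ W} =
      {f | f ∈ R ∧ ∀ (i : Fin N) (j : Fin M), c j i ≠ 0 → f (p i) = f (q j)} := by
  ext f
  simp only [Set.mem_setOf_eq]
  constructor
  · rintro ⟨hfR, hstab⟩
    refine ⟨hfR, fun i j hc => ?_⟩
    have h := hstab (φ j) (hφW j)
    rw [hW] at h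
    have hi := h.2 i
    have : (f * φ j) (p i) = f (p i) * φ j (p i) := rfl
    rw [this, hφp] at hi
    have hsum : (∑ m, c m i * (f * φ j) (q m)) = c j i * (f (q j)) := by
      rw [Finset.sum_eq_single j]
      · simp [hφq]
      · intro m _ hm
        simp [Pi.mul_apply, hφq, hm]
      · simp
    rw [hsum] at hi
    have : c j i * f (p i) = c j i * f (q j) := by
      have := hi
      ring_nf at this ⊢
      linear_combination -this
    exact mul_left_cancel₀ hc this
  · rintro ⟨hfR, hcond⟩
    refine ⟨hfR, fun F hF => ?_⟩
    rw [hW] at hF ⊢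
    refine ⟨hRH f hfR F hF.1, fun i => ?_⟩
    have hFi := hF.2 i
    have : (f * F) (p i) = f (p i) * F (p i) := rfl
    rw [this, hFi, mul_neg, Finset.mul_sum, neg_inj]
    apply Finset.sum_congr rfl
    intro j _
    by_cases hc : c j i = 0
    · simp [hc]
    · rw [hcond i j hc]
      simp [Pi.mul_apply]; ring
end

section
/- Fix an index i with n_i ≥ 2 and an index j with 1 ≤ j ≤ n_i, and suppose H_{i,j} ∈ R satisfies H_{i,j}(p_{k,l}) = δ_{i,k}δ_{j,l} for all k, l. Then there is no f ∈ R_e such that f(p_{i,j}) ≠ 0 and f·H_{i,j} ∈ R_e. (This shows H_{i,j} lies in the localization of R but not of R_e at the corresponding maximal ideal, so the local ring of R_e at the identified point is not normal; this is the key step of Proposition 4.9(ii).) -/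
/-!
Proposition 4.9 (ii), key step: for a fixed `i` with `n_i ≥ 2` and `j`,
there is no `f ∈ R_e` with `f(p_{i,j}) ≠ 0` and `f·H_{i,j} ∈ R_e`.
-/

theorem prop_4_9_ii {X : Type*} (s : ℕ) (hs : 1 ≤ s)
    (n : Fin s → ℕ) (hn : ∀ i, 1 ≤ n i)
    (p : (i : Fin s) → Fin (n i) → X)
    (hp : Function.Injective fun x : Σ i : Fin s, Fin (n i) => p x.1 x.2)
    (R : Subring (X → ℂ))
    (Re : Set (X → ℂ))
    (hRe : Re = {f | f ∈ R ∧ ∀ i j j', f (p i j) = f (p i j')})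
    (i : Fin s) (hni : 2 ≤ n i) (j : Fin (n i))
    (H : X → ℂ) (hHR : H ∈ R)
    (hH : ∀ k l, H (p k l) =
      if (⟨i, j⟩ : Σ i : Fin s, Fin (n i)) = ⟨k, l⟩ then 1 else 0) :
    ¬ ∃ f, f ∈ Re ∧ f (p i j) ≠ 0 ∧ f * H ∈ Re := by
  rintro ⟨f, hf, hfj, hfH⟩
  subst hRe
  obtain ⟨j', hj'⟩ : ∃ j' : Fin (n i), j' ≠ j := by
    have : Nontrivial (Fin (n i)) := Fin.nontrivial_iff_two_le.mpr hni
    exact exists_ne j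
  have h1 : (f * H) (p i j) = f (p i j) := by
    have := hH i j
    simp [Pi.mul_apply, this]
  have h2 : (f * H) (p i j') = 0 := by
    have := hH i j'
    rw [if_neg (by simpa using hj'.symm)] at this
    simp [Pi.mul_apply, this]
  have := hfH.2 i j j'
  rw [h1, h2] at this
  exact hfj this
end

section
/- P∞ is a prime ideal of the ring A. Moreover, if there exist an integer n ≥ 1 and h ∈ R with ord h = n, then P∞ does not contain the ideal A₊ = {P ∈ A : the coefficient of X⁰ in P is 0}. (This is the paper's claim in Section 4 that p'_∞ = ⊕_{n≥0} R_e(n−1) is a point of C' = Proj A'.) -/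
/-!
Section 4 / Appendix B: `P∞ = ⊕_{n≥0} R(n−1)` is a prime ideal of the graded
ring `A = ⊕_{n≥0} R(n)` (modelled inside `V[X]`, `f·Xⁿ` representing `f ∈ R(n)`
in degree `n`), and if `R` contains an element of order `n` for some `n ≥ 1`,
then `P∞` does not contain the irrelevant ideal `A₊`.
-/

noncomputable section

/-- `V = ℂ((z))`, the field of formal Laurent series over `ℂ`. -/
abbrev VV : Type := LaurentSeries ℂ

/-- `ord f = -order f`: the order of the pole at `z = 0`. -/
def ordV (f : VV) : ℤ := -f.order

/-- `R(n) = {f ∈ R : f = 0 or ord f ≤ n}`. -/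
def Rfilt (R : Subring VV) (n : ℤ) : Set VV := {f | f ∈ R ∧ (f = 0 ∨ ordV f ≤ n)}

/-- The model of the graded ring `A = ⊕_{n ≥ 0} R(n)` inside `V[X]`. -/
def Agr (R : Subring VV) : Set (Polynomial VV) :=
  {P | ∀ n : ℕ, P.coeff n ∈ Rfilt R n}

/-- The model of `P∞ = ⊕_{n ≥ 0} R(n-1)`. -/
def Pinf (R : Subring VV) : Set (Polynomial VV) :=
  {P | ∀ n : ℕ, P.coeff n ∈ Rfilt R ((n : ℤ) - 1)}

lemma ordV_mul {f g : VV} (hf : f ≠ 0) (hg : g ≠ 0) :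
    ordV (f * g) = ordV f + ordV g := by
  simp [ordV, HahnSeries.order_mul hf hg]; ring

lemma Rfilt_mono (R : Subring VV) {m n : ℤ} (h : m ≤ n) : Rfilt R m ⊆ Rfilt R n :=
  fun f hf => ⟨hf.1, hf.2.imp id (fun h' => h'.trans h)⟩

lemma Rfilt_zero (R : Subring VV) (n : ℤ) : (0 : VV) ∈ Rfilt R n :=
  ⟨R.zero_mem, Or.inl rfl⟩

lemma Rfilt_add (R : Subring VV) {n : ℤ} {f g : VV} (hf : f ∈ Rfilt R n)
    (hg : g ∈ Rfilt R n) : f + g ∈ Rfilt R n := by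
  refine ⟨R.add_mem hf.1 hg.1, ?_⟩
  by_cases h0 : f + g = 0
  · exact Or.inl h0
  rcases hf.2 with rfl | hf2
  · simpa using hg.2
  rcases hg.2 with rfl | hg2
  · simpa using Or.inr hf2
  right
  have := HahnSeries.min_order_le_order_add (x := f) (y := g)
  unfold ordV at *
  rcases min_le_iff.mp (this h0) with h1 | h1 <;> omega

lemma Rfilt_neg (R : Subring VV) {n : ℤ} {f : VV} (hf : f ∈ Rfilt R n) :
    -f ∈ Rfilt R n := by
  refine ⟨R.neg_mem hf.1, ?_⟩
  rcases hf.2 with rfl | hf2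
  · exact Or.inl (neg_zero)
  · right; simpa [ordV, HahnSeries.order_neg] using hf2

lemma Rfilt_mul (R : Subring VV) {m n : ℤ} {f g : VV} (hf : f ∈ Rfilt R m)
    (hg : g ∈ Rfilt R n) : f * g ∈ Rfilt R (m + n) := by
  refine ⟨R.mul_mem hf.1 hg.1, ?_⟩
  rcases hf.2 with rfl | hf2
  · simp
  rcases hg.2 with rfl | hg2
  · simp
  by_cases h0 : f = 0
  · simp [h0]
  by_cases h1 : g = 0
  · simp [h1]
  right
  rw [ordV_mul h0 h1]
  exact add_le_add hf2 hg2

lemma Rfilt_sum (R : Subring VV) {n : ℤ} {ι : Type*} (s : Finset ι) (f : ι → VV)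
    (h : ∀ i ∈ s, f i ∈ Rfilt R n) : ∑ i ∈ s, f i ∈ Rfilt R n := by
  classical
  induction s using Finset.induction with
  | empty => simpa using Rfilt_zero R n
  | @insert a s hx ih =>
    rw [Finset.sum_insert hx]
    exact Rfilt_add R (h a (Finset.mem_insert_self a s))
      (ih fun i hi => h i (Finset.mem_insert_of_mem hi))

/-- `P∞` is a prime ideal of `A`; and if some element of `R` has order `n ≥ 1`,
then `P∞` does not contain `A₊`. -/
theorem Pinf_prime (R : Subring VV) :
    Pinf R ⊆ Agr R ∧
    (0 : Polynomial VV) ∈ Pinf R ∧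
    (∀ P ∈ Pinf R, ∀ Q ∈ Pinf R, P + Q ∈ Pinf R) ∧
    (∀ P ∈ Pinf R, -P ∈ Pinf R) ∧
    (∀ P ∈ Agr R, ∀ Q ∈ Pinf R, P * Q ∈ Pinf R) ∧
    Pinf R ≠ Agr R ∧
    (∀ P ∈ Agr R, ∀ Q ∈ Agr R, P * Q ∈ Pinf R → P ∈ Pinf R ∨ Q ∈ Pinf R) ∧
    ((∃ nn : ℤ, 1 ≤ nn ∧ ∃ h : VV, h ∈ R ∧ h ≠ 0 ∧ ordV h = nn) →
      ¬ ({P ∈ Agr R | P.coeff 0 = 0} ⊆ Pinf R)) := by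
  classical
  have ord_one : ordV (1 : VV) = 0 := by simp [ordV]
  refine ⟨?_, ?_, ?_, ?_, ?_, ?_, ?_, ?_⟩
  · intro P hP n
    exact Rfilt_mono R (by omega) (hP n)
  · intro n; simpa using Rfilt_zero R _
  · intro P hP Q hQ n
    rw [Polynomial.coeff_add]
    exact Rfilt_add R (hP n) (hQ n)
  · intro P hP n
    rw [Polynomial.coeff_neg]
    exact Rfilt_neg R (hP n)
  · intro P hP Q hQ n
    rw [Polynomial.coeff_mul]
    refine Rfilt_sum R _ _ ?_
    rintro ⟨a, b⟩ hab
    have : a + b = n := Finset.HasAntidiagonal.mem_antidiagonal.mp hab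
    have := Rfilt_mul R (hP a) (hQ b)
    refine Rfilt_mono R ?_ this
    omega
  · intro hEq
    have h1 : (1 : Polynomial VV) ∈ Agr R := by
      intro n
      by_cases h : n = 0
      · subst h; simp [Polynomial.coeff_one]
        exact ⟨R.one_mem, Or.inr (by simp [ord_one])⟩
      · simp [Polynomial.coeff_one, h]; exact Rfilt_zero R _
    rw [← hEq] at h1
    have := (h1 0).2
    rcases this with h0 | h0
    · simp at h0
    · rw [Polynomial.coeff_one] at h0
      simp [ord_one] at h0
  · intro P hP Q hQ hPQ
    by_contra hc
    push_neg at hc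
    obtain ⟨hPn, hQn⟩ := hc
    have hPe : ∃ n : ℕ, P.coeff n ∉ Rfilt R ((n : ℤ) - 1) := by
      by_contra h; push_neg at h; exact hPn h
    have hQe : ∃ n : ℕ, Q.coeff n ∉ Rfilt R ((n : ℤ) - 1) := by
      by_contra h; push_neg at h; exact hQn h
    set i := Nat.find hPe with hi_def
    set j := Nat.find hQe with hj_def
    have hi : P.coeff i ∉ Rfilt R ((i : ℤ) - 1) := Nat.find_spec hPe
    have hj : Q.coeff j ∉ Rfilt R ((j : ℤ) - 1) := Nat.find_spec hQe
    have hi_min : ∀ a < i, P.coeff a ∈ Rfilt R ((a : ℤ) - 1) := by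
      intro a ha; exact not_not.mp (Nat.find_min hPe ha)
    have hj_min : ∀ b < j, Q.coeff b ∈ Rfilt R ((b : ℤ) - 1) := by
      intro b hb; exact not_not.mp (Nat.find_min hQe hb)
    -- key: P.coeff i * Q.coeff j ∈ Rfilt R (i+j-1)
    have hsum : (P * Q).coeff (i + j) ∈ Rfilt R ((i : ℤ) + j - 1) := by
      have := hPQ (i + j)
      push_cast at this ⊢
      convert this using 2
    have hrest : ∀ p ∈ (Finset.HasAntidiagonal.antidiagonal (i + j)).erase (i, j),
        P.coeff p.1 * Q.coeff p.2 ∈ Rfilt R ((i : ℤ) + j - 1) := by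
      rintro ⟨a, b⟩ hab
      have hne : (a, b) ≠ (i, j) := Finset.ne_of_mem_erase hab
      have habs : a + b = i + j := Finset.HasAntidiagonal.mem_antidiagonal.mp (Finset.mem_of_mem_erase hab)
      by_cases ha : a < i
      · refine Rfilt_mono R ?_ (Rfilt_mul R (hi_min a ha) (hQ b))
        omega
      · have hb : b < j := by
          rcases Nat.lt_or_ge b j with h | h
          · exact h
          · exfalso
            have : a = i ∧ b = j := by omega
            exact hne (by rw [this.1, this.2])
        refine Rfilt_mono R ?_ (Rfilt_mul R (hP a) (hj_min b hb))
        omega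
    have hterm : P.coeff i * Q.coeff j ∈ Rfilt R ((i : ℤ) + j - 1) := by
      have hmem : (i, j) ∈ Finset.HasAntidiagonal.antidiagonal (i + j) := Finset.HasAntidiagonal.mem_antidiagonal.mpr rfl
      have hsplit : (P * Q).coeff (i + j) =
          P.coeff i * Q.coeff j +
          ∑ p ∈ (Finset.HasAntidiagonal.antidiagonal (i + j)).erase (i, j), P.coeff p.1 * Q.coeff p.2 := by
        rw [Polynomial.coeff_mul, ← Finset.add_sum_erase _ _ hmem]
      have : P.coeff i * Q.coeff j = (P * Q).coeff (i + j) +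
          -(∑ p ∈ (Finset.HasAntidiagonal.antidiagonal (i + j)).erase (i, j), P.coeff p.1 * Q.coeff p.2) := by
        rw [hsplit]; ring
      rw [this]
      exact Rfilt_add R hsum (Rfilt_neg R (Rfilt_sum R _ _ hrest))
    -- but ordV (P.coeff i * Q.coeff j) = i + j
    have hPi := hP i
    have hQj := hQ j
    have hPi_ne : P.coeff i ≠ 0 := fun h => hi (h ▸ Rfilt_zero R _)
    have hQj_ne : Q.coeff j ≠ 0 := fun h => hj (h ▸ Rfilt_zero R _)
    have hPi_ord : ordV (P.coeff i) = i := by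
      rcases hPi.2 with h | h
      · exact absurd h hPi_ne
      · by_contra hne
        exact hi ⟨hPi.1, Or.inr (by omega)⟩
    have hQj_ord : ordV (Q.coeff j) = j := by
      rcases hQj.2 with h | h
      · exact absurd h hQj_ne
      · by_contra hne
        exact hj ⟨hQj.1, Or.inr (by omega)⟩
    have hprod_ne : P.coeff i * Q.coeff j ≠ 0 := mul_ne_zero hPi_ne hQj_ne
    rcases hterm.2 with h | h
    · exact hprod_ne h
    · rw [ordV_mul hPi_ne hQj_ne, hPi_ord, hQj_ord] at h
      omega
  · rintro ⟨nn, hnn, h, hhR, hh0, hord⟩ hsub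
    set N := nn.toNat with hN
    have hN1 : 1 ≤ N := by omega
    have hNnn : (N : ℤ) = nn := by omega
    set P : Polynomial VV := Polynomial.C h * Polynomial.X ^ N with hPdef
    have hcoeff : ∀ n : ℕ, P.coeff n = if n = N then h else 0 := by
      intro n
      rw [hPdef, Polynomial.coeff_C_mul, Polynomial.coeff_X_pow]
      by_cases hn : n = N <;> simp [hn]
    have hPA : P ∈ Agr R := by
      intro n
      rw [hcoeff]
      by_cases hn : n = N
      · subst hn; rw [if_pos rfl]
        exact ⟨hhR, Or.inr (by omega)⟩
      · rw [if_neg hn]; exact Rfilt_zero R _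
    have hP0 : P.coeff 0 = 0 := by rw [hcoeff, if_neg (by omega)]
    have := hsub ⟨hPA, hP0⟩ N
    rw [hcoeff N, if_pos rfl] at this
    rcases this.2 with h' | h'
    · exact hh0 h'
    · omega

end
end

section
/- Let a, x be real numbers with a > 0 and 0 < x < a. Then i·θ₁₁(ix | ia) is a positive real number, i.e. there exists a real r > 0 with i·θ₁₁(ix | ia) = r. (Lemma 5.3) -/
/-!
Lemma 5.3: for `a > 0` and `0 < x < a`, `i·θ₁₁(ix | ia)` is a positive real.
-/

open Complex

/-- The theta function with odd characteristic:
`θ₁₁(z|τ) = Σ_{n ∈ ℤ} exp(πiτ(n+1/2)² + 2πi(n+1/2)(z+1/2))`. -/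
noncomputable def theta11 (z τ : ℂ) : ℂ :=
  ∑' n : ℤ, Complex.exp (Real.pi * Complex.I * τ * ((n : ℂ) + 1 / 2) ^ 2 +
    2 * Real.pi * Complex.I * ((n : ℂ) + 1 / 2) * (z + 1 / 2))

open Real


lemma summable_gauss_nat (c d : ℝ) (hc : 0 < c) :
    Summable fun n : ℕ => Real.exp (-c * ((n : ℝ) + d) ^ 2) := by
  apply summable_of_ratio_norm_eventually_le (r := Real.exp (-1)) (by
    rw [Real.exp_lt_one_iff]; norm_num)
  rw [Filter.eventually_atTop]
  refine ⟨⌈|d| + 1/c⌉₊, fun n hn => ?_⟩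
  have hn' : (|d| + 1/c : ℝ) ≤ n := le_trans (Nat.le_ceil _) (by exact_mod_cast hn)
  rw [Real.norm_eq_abs, Real.norm_eq_abs, Real.abs_exp, Real.abs_exp, ← Real.exp_add,
    Real.exp_le_exp]
  have h1 : 1/c ≤ (n:ℝ) + d := by
    have := neg_abs_le d
    linarith
  have h2 : (1:ℝ) ≤ c * ((n:ℝ) + d) := by
    have := (div_le_iff₀' hc).mp h1
    linarith
  push_cast
  nlinarith [h2, hc]

lemma summable_gauss (c d : ℝ) (hc : 0 < c) :
    Summable fun n : ℤ => Real.exp (-c * ((n : ℝ) + d) ^ 2) := by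
  apply Summable.of_nat_of_neg
  · exact_mod_cast summable_gauss_nat c d hc
  · have := summable_gauss_nat c (-d) hc
    apply this.congr
    intro n
    push_cast
    ring_nf

noncomputable def fterm (a x : ℝ) (n : ℤ) : ℝ :=
  Real.exp (-Real.pi*a*((n:ℝ)+1/2)^2 - 2*Real.pi*x*((n:ℝ)+1/2))

noncomputable def Tterm (a x : ℝ) (n : ℤ) : ℝ :=
  ((Int.negOnePow (n+1) : ℤ) : ℝ) * fterm a x n

lemma fterm_eq (a x : ℝ) (ha : 0 < a) (n : ℤ) :
    fterm a x n = Real.exp (Real.pi*x^2/a) *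
      Real.exp (-(Real.pi*a)*((n:ℝ) + (1/2 + x/a))^2) := by
  rw [fterm, ← Real.exp_add]
  congr 1
  field_simp
  ring

lemma summable_fterm (a x : ℝ) (ha : 0 < a) : Summable (fterm a x) := by
  have h := (summable_gauss (Real.pi*a) (1/2 + x/a) (by positivity)).mul_left
    (Real.exp (Real.pi*x^2/a))
  exact h.congr fun n => (fterm_eq a x ha n).symm

lemma abs_negOnePow_real (k : ℤ) : |((Int.negOnePow k : ℤ) : ℝ)| = 1 := by
  rcases Int.even_or_odd k with h | h
  · rw [Int.negOnePow_even _ h]; norm_num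
  · rw [Int.negOnePow_odd _ h]; norm_num

lemma abs_Tterm (a x : ℝ) (n : ℤ) : |Tterm a x n| = fterm a x n := by
  rw [Tterm, abs_mul]
  have : |((Int.negOnePow (n+1) : ℤ) : ℝ)| = 1 := by
    rcases Int.even_or_odd (n+1) with h | h
    · rw [Int.negOnePow_even _ h]; norm_num
    · rw [Int.negOnePow_odd _ h]; norm_num
  rw [this, one_mul, fterm, _root_.abs_of_nonneg (Real.exp_nonneg _)]

lemma summable_Tterm (a x : ℝ) (ha : 0 < a) : Summable (Tterm a x) := by
  refine (summable_fterm a x ha).of_norm_bounded (fun n => ?_)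
  rw [Real.norm_eq_abs, abs_Tterm]

lemma theta_term_eq (a x : ℝ) (n : ℤ) :
    Complex.I * Complex.exp (Real.pi * Complex.I * (Complex.I * (a:ℂ)) * ((n : ℂ) + 1 / 2) ^ 2 +
      2 * Real.pi * Complex.I * ((n : ℂ) + 1 / 2) * (Complex.I * (x:ℂ) + 1 / 2)) =
    ((Tterm a x n : ℝ) : ℂ) := by
  have hexp : (Real.pi : ℂ) * Complex.I * (Complex.I * (a:ℂ)) * ((n : ℂ) + 1 / 2) ^ 2 +
      2 * Real.pi * Complex.I * ((n : ℂ) + 1 / 2) * (Complex.I * (x:ℂ) + 1 / 2) =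
      ((-Real.pi*a*((n:ℝ)+1/2)^2 - 2*Real.pi*x*((n:ℝ)+1/2) : ℝ) : ℂ)
        + ((n:ℂ) * (Real.pi * Complex.I) + (Real.pi/2) * Complex.I) := by
    push_cast
    linear_combination ((Real.pi:ℂ)*a*((n:ℂ)+1/2)^2 + 2*Real.pi*x*((n:ℂ)+1/2)) * Complex.I_sq
  rw [hexp, Complex.exp_add, Complex.exp_add, Complex.exp_int_mul, Complex.exp_pi_mul_I]
  have h2 : Complex.exp ((Real.pi/2 : ℂ) * Complex.I) = Complex.I := by
    rw [Complex.exp_mul_I]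
    norm_num [Complex.cos_pi_div_two, Complex.sin_pi_div_two]
  rw [h2, Tterm, fterm]
  push_cast [Int.cast_negOnePow ℝ, Complex.ofReal_exp]
  rw [zpow_add₀ (by norm_num : (-1:ℂ) ≠ 0)]
  ring_nf
  rw [Complex.I_sq]
  ring

lemma theta_reduction (a x : ℝ) :
    Complex.I * theta11 (Complex.I * (x:ℂ)) (Complex.I * (a:ℂ)) = ((∑' n : ℤ, Tterm a x n : ℝ) : ℂ) := by
  rw [theta11, ← tsum_mul_left, Complex.ofReal_tsum]
  exact tsum_congr (theta_term_eq a x)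

lemma Tterm_symm (a x : ℝ) (n : ℤ) :
    Tterm a (a - x) (-n-2) = Real.exp (Real.pi*a - 2*Real.pi*x) * Tterm a x n := by
  unfold Tterm fterm
  rw [show -n-2+1 = -(n+1) by ring, Int.negOnePow_neg]
  have key : ∀ (s c e2 : ℝ), Real.exp c * (s * Real.exp e2) = s * Real.exp (c + e2) := by
    intro s c e2; rw [Real.exp_add]; ring
  rw [key]
  congr 1
  push_cast
  ring

lemma T_symm (a x : ℝ) :
    ∑' n : ℤ, Tterm a (a - x) n
      = Real.exp (Real.pi*a - 2*Real.pi*x) * ∑' n : ℤ, Tterm a x n := by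
  let e : ℤ ≃ ℤ := ⟨fun n => -n-2, fun n => -n-2, fun n => by simp only []; omega, fun n => by simp only []; omega⟩
  rw [← e.tsum_eq (Tterm a (a-x)), ← tsum_mul_left]
  exact tsum_congr fun n => Tterm_symm a x n

lemma two_mul_add_three_le (m : ℕ) : (2*(m:ℝ)+3) ≤ 3*3^m := by
  induction m with
  | zero => norm_num
  | succ k ih =>
    have : (3:ℝ)*3^k ≥ 3 := by
      have : (1:ℝ) ≤ 3^k := one_le_pow₀ (by norm_num)
      nlinarith
    push_cast
    push_cast at ih
    calc (2*((k:ℝ)+1)+3) = (2*k+3) + 2 := by ring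
    _ ≤ 3*3^k + 2 := by linarith
    _ ≤ 3*3^(k+1) := by rw [pow_succ]; nlinarith
  
lemma geom_tail_bound {u : ℕ → ℝ} {A q : ℝ} (hA : 0 ≤ A) (hq0 : 0 ≤ q) (hq : q < 1)
    (hb : ∀ m, |u m| ≤ A * q ^ m) :
    Summable u ∧ Summable (fun m => |u m|) ∧ ∑' m, |u m| ≤ A / (1 - q) := by
  have hg : Summable (fun m : ℕ => A * q ^ m) :=
    (summable_geometric_of_lt_one hq0 hq).mul_left A
  have habs : Summable (fun m => |u m|) := by
    apply Summable.of_nonneg_of_le (fun m => abs_nonneg _) hb hg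
  refine ⟨habs.of_abs, habs, ?_⟩
  calc ∑' m, |u m| ≤ ∑' m, A * q ^ m := Summable.tsum_le_tsum hb habs hg
  _ = A * (1-q)⁻¹ := by rw [tsum_mul_left, tsum_geometric_of_lt_one hq0 hq]
  _ = A / (1-q) := by rw [div_eq_mul_inv]

lemma abs_sin_nat_mul_le (n : ℕ) (θ : ℝ) (h0 : 0 ≤ θ) (hpi : θ ≤ Real.pi) :
    |Real.sin (n * θ)| ≤ n * Real.sin θ := by
  have hs : 0 ≤ Real.sin θ := Real.sin_nonneg_of_nonneg_of_le_pi h0 hpi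
  induction n with
  | zero => simp
  | succ k ih =>
    push_cast
    rw [show ((k:ℝ)+1)*θ = k*θ + θ by ring, Real.sin_add]
    calc |Real.sin (k*θ) * Real.cos θ + Real.cos (k*θ) * Real.sin θ|
        ≤ |Real.sin (k*θ) * Real.cos θ| + |Real.cos (k*θ) * Real.sin θ| := abs_add_le _ _
    _ ≤ |Real.sin (k*θ)| * 1 + 1 * Real.sin θ := by
        rw [abs_mul, abs_mul]
        gcongr
        · exact abs_cos_le_one _
        · exact abs_cos_le_one _
        · rw [_root_.abs_of_nonneg hs]
    _ ≤ (k:ℝ) * Real.sin θ + 1 * Real.sin θ := by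
        have := ih
        push_cast at this ⊢
        nlinarith [this]
    _ = ((k:ℝ)+1) * Real.sin θ := by ring

lemma exp_odd_sub (θ : ℝ) (hθ : 0 ≤ θ) (n : ℕ) :
    Real.exp ((2*n+1)*θ) - Real.exp (-((2*n+1)*θ))
      ≤ (2*n+1) * Real.exp (2*n*θ) * (Real.exp θ - Real.exp (-θ)) := by
  have hD : 0 ≤ Real.exp θ - Real.exp (-θ) := by
    have := Real.exp_le_exp.mpr (by linarith : -θ ≤ θ); linarith
  induction n with
  | zero => norm_num
  | succ k ih =>
    have h1 : Real.exp ((2*((k:ℝ)+1)+1)*θ) - Real.exp (-((2*((k:ℝ)+1)+1)*θ))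
        = Real.exp (2*θ) * (Real.exp ((2*(k:ℝ)+1)*θ) - Real.exp (-((2*(k:ℝ)+1)*θ)))
          + Real.exp (-((2*(k:ℝ)+1)*θ)) * (Real.exp (2*θ) - Real.exp (-(2*θ))) := by
      simp only [mul_sub, ← Real.exp_add]
      ring_nf
    have hm1 : Real.exp (2*θ) * (Real.exp ((2*(k:ℝ)+1)*θ) - Real.exp (-((2*(k:ℝ)+1)*θ)))
        ≤ (2*(k:ℝ)+1) * Real.exp ((2*(k:ℝ)+2)*θ) * (Real.exp θ - Real.exp (-θ)) := by
      calc Real.exp (2*θ) * (Real.exp ((2*(k:ℝ)+1)*θ) - Real.exp (-((2*(k:ℝ)+1)*θ)))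
          ≤ Real.exp (2*θ) * ((2*(k:ℝ)+1) * Real.exp (2*(k:ℝ)*θ) * (Real.exp θ - Real.exp (-θ))) :=
            mul_le_mul_of_nonneg_left ih (Real.exp_nonneg _)
      _ = (2*(k:ℝ)+1) * (Real.exp (2*θ) * Real.exp (2*(k:ℝ)*θ)) * (Real.exp θ - Real.exp (-θ)) := by
            ring
      _ = (2*(k:ℝ)+1) * Real.exp ((2*(k:ℝ)+2)*θ) * (Real.exp θ - Real.exp (-θ)) := by
            rw [← Real.exp_add]; ring_nf
    have hk0 : (0:ℝ) ≤ (k:ℝ) := Nat.cast_nonneg k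
    have e1 : Real.exp (-((2*(k:ℝ)+1)*θ)) ≤ 1 := by
      rw [Real.exp_le_one_iff]; nlinarith
    have a1 : Real.exp θ * Real.exp θ = Real.exp (2*θ) := by rw [← Real.exp_add]; ring_nf
    have a2 : Real.exp (-θ) * Real.exp (-θ) = Real.exp (-(2*θ)) := by rw [← Real.exp_add]; ring_nf
    have a3 : Real.exp θ * Real.exp (-θ) = 1 := by rw [← Real.exp_add]; simp
    have e2 : Real.exp (2*θ) - Real.exp (-(2*θ))
        = (Real.exp θ + Real.exp (-θ)) * (Real.exp θ - Real.exp (-θ)) := by nlinarith [a1, a2, a3]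
    have b1 : Real.exp (-θ) ≤ Real.exp ((2*(k:ℝ)+2)*θ) := Real.exp_le_exp.mpr (by nlinarith)
    have b2 : Real.exp θ ≤ Real.exp ((2*(k:ℝ)+2)*θ) := Real.exp_le_exp.mpr (by nlinarith)
    have hE2 : 0 ≤ Real.exp (2*θ) - Real.exp (-(2*θ)) := by
      have := Real.exp_le_exp.mpr (by linarith : -(2*θ) ≤ 2*θ); linarith
    have hm2 : Real.exp (-((2*(k:ℝ)+1)*θ)) * (Real.exp (2*θ) - Real.exp (-(2*θ)))
        ≤ 2 * Real.exp ((2*(k:ℝ)+2)*θ) * (Real.exp θ - Real.exp (-θ)) := by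
      calc Real.exp (-((2*(k:ℝ)+1)*θ)) * (Real.exp (2*θ) - Real.exp (-(2*θ)))
          ≤ 1 * (Real.exp (2*θ) - Real.exp (-(2*θ))) := mul_le_mul_of_nonneg_right e1 hE2
      _ = (Real.exp θ + Real.exp (-θ)) * (Real.exp θ - Real.exp (-θ)) := by rw [one_mul, e2]
      _ ≤ (2 * Real.exp ((2*(k:ℝ)+2)*θ)) * (Real.exp θ - Real.exp (-θ)) := by
            apply mul_le_mul_of_nonneg_right (by linarith) hD
      _ = 2 * Real.exp ((2*(k:ℝ)+2)*θ) * (Real.exp θ - Real.exp (-θ)) := by ring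
    push_cast
    calc Real.exp ((2*((k:ℝ)+1)+1)*θ) - Real.exp (-((2*((k:ℝ)+1)+1)*θ))
        = _ := h1
    _ ≤ (2*(k:ℝ)+1) * Real.exp ((2*(k:ℝ)+2)*θ) * (Real.exp θ - Real.exp (-θ))
          + 2 * Real.exp ((2*(k:ℝ)+2)*θ) * (Real.exp θ - Real.exp (-θ)) := add_le_add hm1 hm2
    _ = (2*((k:ℝ)+1)+1) * Real.exp (2*((k:ℝ)+1)*θ) * (Real.exp θ - Real.exp (-θ)) := by ring_nf

set_option maxHeartbeats 1000000 in
lemma pos_direct (a x : ℝ) (ha : 1 ≤ a) (hx : 0 < x) (hxa : 2*x ≤ a) :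
    0 < ∑' n : ℤ, Tterm a x n := by
  have ha0 : 0 < a := lt_of_lt_of_le one_pos ha
  have hπ3 : (3:ℝ) ≤ Real.pi := by linarith [Real.pi_gt_three]
  set d : ℕ → ℝ := fun m => fterm a x (-(m:ℤ)-1) - fterm a x (m:ℤ) with hd
  have hsT := summable_Tterm a x ha0
  have hs1 : Summable (fun m : ℕ => Tterm a x (m:ℤ)) :=
    hsT.comp_injective (fun m n h => by exact_mod_cast h)
  have hs2 : Summable (fun m : ℕ => Tterm a x (-((m:ℤ)+1))) :=
    hsT.comp_injective (fun m n h => by omega)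
  have hpair : ∀ m : ℕ, Tterm a x (m:ℤ) + Tterm a x (-((m:ℤ)+1))
      = ((Int.negOnePow (m:ℤ) : ℤ) : ℝ) * d m := by
    intro m
    rw [Tterm, Tterm, show (-((m:ℤ)+1))+1 = -(m:ℤ) by ring, Int.negOnePow_neg,
      Int.negOnePow_succ, hd]
    simp only [Units.val_neg, Int.cast_neg, show -((m:ℤ)+1) = -(m:ℤ)-1 by ring]
    ring
  have hsplit : ∑' n : ℤ, Tterm a x n = ∑' m : ℕ, ((Int.negOnePow (m:ℤ) : ℤ) : ℝ) * d m := by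
    rw [tsum_of_nat_of_neg_add_one hs1 hs2, ← Summable.tsum_add hs1 hs2]
    exact tsum_congr hpair
  have hdpos : ∀ m : ℕ, 0 < d m := by
    intro m
    rw [hd]
    simp only []
    rw [fterm, fterm, sub_pos, Real.exp_lt_exp]
    have h0 : (0:ℝ) ≤ (m:ℝ) := Nat.cast_nonneg m
    have hπx : 0 < Real.pi * x := mul_pos Real.pi_pos hx
    push_cast
    nlinarith [hπx, mul_nonneg hπx.le h0]
  have hD : 0 < Real.exp (Real.pi*x) - Real.exp (-(Real.pi*x)) := by
    rw [sub_pos, Real.exp_lt_exp]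
    nlinarith [Real.pi_pos]
  have e0 : d 0 = Real.exp (-(Real.pi*a)*(1/2:ℝ)^2)
      * (Real.exp (Real.pi*x) - Real.exp (-(Real.pi*x))) := by
    rw [hd]
    simp only []
    rw [fterm, fterm, mul_sub, ← Real.exp_add, ← Real.exp_add]
    push_cast
    ring_nf
  have hπx : 0 ≤ Real.pi * x := mul_nonneg Real.pi_pos.le hx.le
  have e1 : ∀ m : ℕ, d (m+1) = Real.exp (-(Real.pi*a)*(((m:ℝ)+1)+1/2)^2)
      * (Real.exp ((2*((m:ℝ)+1)+1)*(Real.pi*x)) - Real.exp (-((2*((m:ℝ)+1)+1)*(Real.pi*x)))) := by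
    intro m
    rw [hd]
    simp only []
    rw [fterm, fterm, mul_sub, ← Real.exp_add, ← Real.exp_add]
    push_cast
    ring_nf
  clear_value d
  set q : ℝ := 3*Real.exp (-3) with hq
  have hq0 : 0 ≤ q := by positivity
  have hexp3 : (6:ℝ) < Real.exp 3 := by
    have h1 : Real.exp 3 = (Real.exp 1)^3 := by
      rw [← Real.exp_nat_mul]
      norm_num
    have h2 : (2.7:ℝ) < Real.exp 1 := by nlinarith [Real.exp_one_gt_d9]
    have h3 : (2.7:ℝ)^2 < (Real.exp 1)^2 := by nlinarith [h2]
    nlinarith [h1, h2, h3, Real.exp_pos 1]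
  have hEinv : Real.exp 3 * (Real.exp 3)⁻¹ = 1 := mul_inv_cancel₀ (ne_of_gt (Real.exp_pos 3))
  have h2q : 2*q < 1 := by
    rw [hq, Real.exp_neg]
    nlinarith [hexp3, hEinv, inv_pos.mpr (Real.exp_pos 3)]
  have hπa : (3:ℝ) ≤ Real.pi * a := by nlinarith [Real.pi_pos]
  have hkey : ∀ m : ℕ, d (m+1) ≤ (q * d 0) * q^m := by
    intro m
    have h0 : (0:ℝ) ≤ (m:ℝ) := Nat.cast_nonneg m
    have hbound := exp_odd_sub (Real.pi*x) hπx (m+1)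
    push_cast at hbound
    have h23 : (2*((m:ℝ)+1)+1) ≤ 3*3^m := by
      have := two_mul_add_three_le m
      linarith
    have k1 : (2*((m:ℝ)+1))*(Real.pi*x) ≤ ((m:ℝ)+1)*(Real.pi*a) := by
      have hmp : (0:ℝ) ≤ ((m:ℝ)+1)*Real.pi := by positivity
      have := mul_le_mul_of_nonneg_left hxa hmp
      nlinarith [this]
    have k2 : 3*(((m:ℝ)+1)^2) ≤ (Real.pi*a)*(((m:ℝ)+1)^2) :=
      mul_le_mul_of_nonneg_right hπa (sq_nonneg _)
    have hexpineq : (-(Real.pi*a)*(((m:ℝ)+1)+1/2)^2) + (2*((m:ℝ)+1))*(Real.pi*x)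
        ≤ (-3*((m:ℝ)+1)) + (-(Real.pi*a)*(1/2:ℝ)^2) := by
      nlinarith [k1, k2, mul_nonneg h0 (by linarith : (0:ℝ) ≤ (m:ℝ)+1)]
    have hEE : Real.exp (-(Real.pi*a)*(((m:ℝ)+1)+1/2)^2) * Real.exp ((2*((m:ℝ)+1))*(Real.pi*x))
        ≤ Real.exp (-3*((m:ℝ)+1)) * Real.exp (-(Real.pi*a)*(1/2:ℝ)^2) := by
      rw [← Real.exp_add, ← Real.exp_add, Real.exp_le_exp]
      exact hexpineq
    have hpow' : (3:ℝ)*3^m * Real.exp (-3*((m:ℝ)+1)) = q^(m+1) := by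
      rw [hq, mul_pow, ← Real.exp_nat_mul]
      push_cast
      ring_nf
    calc d (m+1) = Real.exp (-(Real.pi*a)*(((m:ℝ)+1)+1/2)^2)
          * (Real.exp ((2*((m:ℝ)+1)+1)*(Real.pi*x)) - Real.exp (-((2*((m:ℝ)+1)+1)*(Real.pi*x)))) := e1 m
    _ ≤ Real.exp (-(Real.pi*a)*(((m:ℝ)+1)+1/2)^2)
          * ((2*((m:ℝ)+1)+1) * Real.exp (2*((m:ℝ)+1)*(Real.pi*x)) * (Real.exp (Real.pi*x) - Real.exp (-(Real.pi*x)))) :=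
        mul_le_mul_of_nonneg_left hbound (Real.exp_nonneg _)
    _ = (2*((m:ℝ)+1)+1) * (Real.exp (-(Real.pi*a)*(((m:ℝ)+1)+1/2)^2) * Real.exp ((2*((m:ℝ)+1))*(Real.pi*x)))
          * (Real.exp (Real.pi*x) - Real.exp (-(Real.pi*x))) := by ring
    _ ≤ (3*3^m) * (Real.exp (-3*((m:ℝ)+1)) * Real.exp (-(Real.pi*a)*(1/2:ℝ)^2))
          * (Real.exp (Real.pi*x) - Real.exp (-(Real.pi*x))) := by
        apply mul_le_mul_of_nonneg_right _ hD.le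
        apply mul_le_mul h23 hEE (by positivity) (by positivity)
    _ = q^(m+1) * (Real.exp (-(Real.pi*a)*(1/2:ℝ)^2) * (Real.exp (Real.pi*x) - Real.exp (-(Real.pi*x)))) := by
        rw [← hpow']
        ring
    _ = (q * d 0) * q^m := by
        rw [e0, pow_succ]
        ring
  obtain ⟨hsu, hsabs, htail⟩ := geom_tail_bound (A := q * d 0) (q := q)
    (mul_nonneg hq0 (hdpos 0).le) hq0 (by linarith)
    (fun m => by rw [_root_.abs_of_pos (hdpos (m+1))]; exact hkey m)
  have hsF : Summable (fun m : ℕ => ((Int.negOnePow ((m:ℕ):ℤ) : ℤ) : ℝ) * d m) :=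
    (hs1.add hs2).congr hpair
  rw [hsplit, Summable.tsum_eq_zero_add hsF]
  have hF0 : ((Int.negOnePow (((0:ℕ):ℕ):ℤ) : ℤ) : ℝ) * d 0 = d 0 := by
    norm_num
  have habs : ∀ m : ℕ, ‖((Int.negOnePow (((m+1:ℕ)):ℤ) : ℤ) : ℝ) * d (m+1)‖ = d (m+1) := by
    intro m
    rw [Real.norm_eq_abs, abs_mul, abs_negOnePow_real, one_mul, _root_.abs_of_pos (hdpos (m+1))]
  have hsnorm : Summable (fun m : ℕ => ‖((Int.negOnePow (((m+1:ℕ)):ℤ) : ℤ) : ℝ) * d (m+1)‖) := by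
    apply Summable.congr hsu
    intro m
    rw [habs m]
  have hnorm := norm_tsum_le_tsum_norm hsnorm
  have htail2 : ∑' m : ℕ, ‖((Int.negOnePow (((m+1:ℕ)):ℤ) : ℤ) : ℝ) * d (m+1)‖ ≤ (q * d 0)/(1-q) := by
    refine le_trans (le_of_eq (tsum_congr fun m => ?_)) htail
    exact (habs m).trans (_root_.abs_of_pos (hdpos (m+1))).symm
  have hfin : (q * d 0)/(1-q) < d 0 := by
    rw [div_lt_iff₀ (by linarith : (0:ℝ) < 1-q)]
    nlinarith [hdpos 0, hq0]
  have habs2 := (abs_le.mp (le_trans (le_trans (le_of_eq (Real.norm_eq_abs _).symm) hnorm) htail2)).1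
  rw [hF0]
  linarith [habs2, hfin]

lemma poisson_real (a s : ℝ) (ha : 0 < a) :
    ∑' n : ℤ, (((Int.negOnePow (n+1) : ℤ) : ℝ) * Real.exp (-(Real.pi*a)*((n:ℝ)+s)^2))
      = (Real.sqrt a)⁻¹ * ∑' k : ℤ,
          -(Real.exp (-(Real.pi/a)*((k:ℝ)-1/2)^2) * Real.cos (2*Real.pi*s*((k:ℝ)-1/2))) := by
  have ha' : ((a:ℂ)) ≠ 0 := by exact_mod_cast ha.ne'
  set b : ℂ := Complex.I/2 - ((a*s : ℝ):ℂ) with hb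
  set v : ℤ → ℂ := fun k => -(Complex.exp (((-(Real.pi/a)*((k:ℝ)-1/2)^2 : ℝ)):ℂ) *
      Complex.exp ((((2*Real.pi*s*((k:ℝ)-1/2) : ℝ)):ℂ) * Complex.I)) with hv
  -- summability of v
  have hsv : Summable v := by
    apply Summable.of_norm
    have hg : Summable (fun k : ℤ => Real.exp (-(Real.pi/a)*((k:ℝ)-1/2)^2)) := by
      apply (summable_gauss (Real.pi/a) (-1/2) (by positivity)).congr
      intro n
      congr 1
      ring
    apply hg.congr
    intro k
    rw [hv]
    simp only [norm_neg, norm_mul, Complex.norm_exp, Complex.ofReal_re]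
    rw [show ((((2*Real.pi*s*((k:ℝ)-1/2) : ℝ)):ℂ) * Complex.I).re = 0 from by simp,
      Real.exp_zero, mul_one]
  -- step 1: complex per-term identity for LHS
  have hterm1 : ∀ n : ℤ, ((((Int.negOnePow (n+1) : ℤ) : ℝ) * Real.exp (-(Real.pi*a)*((n:ℝ)+s)^2) : ℝ) : ℂ)
      = (-Complex.exp (((-Real.pi*a*s^2 : ℝ)):ℂ)) *
        Complex.exp (-(Real.pi:ℂ) * (a:ℂ) * (n:ℂ)^2 + 2*(Real.pi:ℂ)*b*(n:ℂ)) := by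
    intro n
    have hsplit : -(Real.pi:ℂ) * (a:ℂ) * (n:ℂ)^2 + 2*(Real.pi:ℂ)*b*(n:ℂ)
        = ((-Real.pi*a*(n:ℝ)^2 - 2*Real.pi*(a*s)*(n:ℝ) : ℝ) : ℂ) + (n:ℂ)*((Real.pi:ℂ)*Complex.I) := by
      rw [hb]
      push_cast
      ring
    rw [hsplit, Complex.exp_add, Complex.exp_int_mul, Complex.exp_pi_mul_I]
    push_cast [Int.cast_negOnePow ℝ]
    rw [zpow_add₀ (by norm_num : (-1:ℂ) ≠ 0)]
    rw [show (-(↑Real.pi * (a:ℂ)) * ((n:ℂ) + (s:ℂ)) ^ 2)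
        = (-↑Real.pi * (a:ℂ) * (s:ℂ) ^ 2) + (-↑Real.pi * (a:ℂ) * (n:ℂ)^2 - 2*↑Real.pi*((a:ℂ)*(s:ℂ))*(n:ℂ)) from by ring,
      Complex.exp_add]
    ring
  -- step 2: per-term identity for RHS of tsum_exp_neg_quadratic
  have hterm2 : ∀ k : ℤ, Complex.exp (-(Real.pi:ℂ)/(a:ℂ) * ((k:ℂ) + Complex.I*b)^2)
      = Complex.exp (((Real.pi*a*s^2 : ℝ)):ℂ) * (- v k) := by
    intro k
    have hIb : Complex.I * b = -(1/2 : ℂ) - ((a*s : ℝ):ℂ) * Complex.I := by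
      rw [hb]
      linear_combination (1/2 : ℂ) * Complex.I_sq
    have h1 : (Real.pi/a) * (a*s)^2 = Real.pi*a*s^2 := by field_simp
    have h2 : (Real.pi/a) * (a*s) = Real.pi * s := by field_simp
    have h1c := congrArg (Complex.ofReal) h1
    have h2c := congrArg (Complex.ofReal) h2
    push_cast at h1c h2c
    have hexpk : -(Real.pi:ℂ)/(a:ℂ) * ((k:ℂ) + Complex.I*b)^2
        = ((Real.pi*a*s^2 : ℝ):ℂ) + (((-(Real.pi/a)*((k:ℝ)-1/2)^2 : ℝ):ℂ)
            + ((2*Real.pi*s*((k:ℝ)-1/2) : ℝ):ℂ) * Complex.I) := by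
      rw [hIb]
      push_cast
      linear_combination (-((Real.pi:ℂ)/(a:ℂ))*((a:ℂ)*(s:ℂ))^2) * Complex.I_sq + h1c
        + (2*((k:ℂ) - 1/2)*Complex.I) * h2c
    rw [hexpk, Complex.exp_add, Complex.exp_add, hv]
    simp only [neg_neg]
  have hA : ((a:ℂ))^(1/2:ℂ) = ((Real.sqrt a : ℝ):ℂ) := by
    rw [show (1/2 : ℂ) = ((1/2 : ℝ):ℂ) by norm_num, ← Complex.ofReal_cpow ha.le,
      ← Real.sqrt_eq_rpow]
  have hofL : ((∑' n : ℤ, (((Int.negOnePow (n+1) : ℤ) : ℝ) * Real.exp (-(Real.pi*a)*((n:ℝ)+s)^2)) : ℝ) : ℂ)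
      = (((Real.sqrt a)⁻¹ : ℝ):ℂ) * ∑' k : ℤ, v k := by
    rw [Complex.ofReal_tsum, tsum_congr hterm1, tsum_mul_left,
      Complex.tsum_exp_neg_quadratic (by rwa [Complex.ofReal_re] : 0 < ((a:ℂ)).re) b,
      tsum_congr hterm2, tsum_mul_left, tsum_neg]
    rw [hA]
    rw [show -Complex.exp (((-Real.pi*a*s^2 : ℝ)):ℂ) *
        (1/((Real.sqrt a : ℝ):ℂ) * (Complex.exp (((Real.pi*a*s^2 : ℝ)):ℂ) * -∑' k : ℤ, v k))
        = (Complex.exp (((-Real.pi*a*s^2 : ℝ)):ℂ) * Complex.exp (((Real.pi*a*s^2 : ℝ)):ℂ)) *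
          ((((Real.sqrt a):ℝ):ℂ)⁻¹ * ∑' k : ℤ, v k) from by push_cast; ring]
    rw [← Complex.exp_add]
    push_cast
    rw [show ((-(Real.pi:ℂ)*(a:ℂ)*(s:ℂ)^2) + ((Real.pi:ℂ)*(a:ℂ)*(s:ℂ)^2)) = 0 from by ring,
      Complex.exp_zero, one_mul]
  have hre : ∀ k : ℤ, (v k).re
      = -(Real.exp (-(Real.pi/a)*((k:ℝ)-1/2)^2) * Real.cos (2*Real.pi*s*((k:ℝ)-1/2))) := by
    intro k
    rw [hv]
    simp only [Complex.neg_re, ← Complex.ofReal_exp, Complex.re_ofReal_mul,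
      Complex.exp_ofReal_mul_I_re]
  calc ∑' n : ℤ, (((Int.negOnePow (n+1) : ℤ) : ℝ) * Real.exp (-(Real.pi*a)*((n:ℝ)+s)^2))
      = (((∑' n : ℤ, (((Int.negOnePow (n+1) : ℤ) : ℝ) * Real.exp (-(Real.pi*a)*((n:ℝ)+s)^2)) : ℝ) : ℂ)).re := (Complex.ofReal_re _).symm
  _ = ((((Real.sqrt a)⁻¹ : ℝ):ℂ) * ∑' k : ℤ, v k).re := by rw [hofL]
  _ = (Real.sqrt a)⁻¹ * (∑' k : ℤ, v k).re := by rw [Complex.re_ofReal_mul]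
  _ = (Real.sqrt a)⁻¹ * ∑' k : ℤ, (v k).re := by rw [Complex.re_tsum hsv]
  _ = _ := by rw [tsum_congr hre]

set_option maxHeartbeats 1000000 in
lemma pos_dual (a x : ℝ) (ha0 : 0 < a) (ha1 : a ≤ 1) (hx : 0 < x) (hxa : x < a) :
    0 < ∑' n : ℤ, Tterm a x n := by
  set t : ℝ := x/a with ht
  set s : ℝ := 1/2 + t with hs
  have ht0 : 0 < t := div_pos hx ha0
  have ht1 : t < 1 := (div_lt_one ha0).mpr hxa
  have hπ : (3:ℝ) ≤ Real.pi := by linarith [Real.pi_gt_three]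
  have hsin : 0 < Real.sin (Real.pi*t) :=
    Real.sin_pos_of_pos_of_lt_pi (by positivity) (by nlinarith [Real.pi_pos])
  have hTred : ∀ n : ℤ, Tterm a x n = Real.exp (Real.pi*x^2/a) *
      (((Int.negOnePow (n+1) : ℤ):ℝ) * Real.exp (-(Real.pi*a)*((n:ℝ)+s)^2)) := by
    intro n
    rw [Tterm, fterm_eq a x ha0, hs, ht]
    ring
  rw [tsum_congr hTred, tsum_mul_left]
  apply mul_pos (Real.exp_pos _)
  rw [poisson_real a s ha0]
  apply mul_pos (inv_pos.mpr (Real.sqrt_pos.mpr ha0))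
  set w : ℤ → ℝ := fun k =>
    -(Real.exp (-(Real.pi/a)*((k:ℝ)-1/2)^2) * Real.cos (2*Real.pi*s*((k:ℝ)-1/2))) with hw
  have hcos : ∀ k : ℤ, Real.cos (2*Real.pi*s*((k:ℝ)-1/2))
      = (-1:ℝ)^k * Real.sin ((2*(k:ℝ)-1)*(Real.pi*t)) := by
    intro k
    rw [show 2*Real.pi*s*((k:ℝ)-1/2)
        = (k:ℝ)*Real.pi - (Real.pi/2 - (2*(k:ℝ)-1)*(Real.pi*t)) from by rw [hs]; ring]
    rw [Real.cos_int_mul_pi_sub, Real.cos_pi_div_two_sub]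
  have habsz : ∀ k : ℤ, |(-1:ℝ)^k| = 1 := by
    intro k
    rcases Int.even_or_odd k with h | h
    · rw [h.neg_one_zpow]; norm_num
    · rw [h.neg_one_zpow]; norm_num
  have hgau : Summable (fun k : ℤ => Real.exp (-(Real.pi/a)*((k:ℝ)-1/2)^2)) := by
    apply (summable_gauss (Real.pi/a) (-1/2) (by positivity)).congr
    intro n
    congr 1
    ring
  have hwabs : ∀ k : ℤ, |w k| = Real.exp (-(Real.pi/a)*((k:ℝ)-1/2)^2)
      * |Real.sin ((2*(k:ℝ)-1)*(Real.pi*t))| := by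
    intro k
    rw [hw]
    simp only []
    rw [abs_neg, abs_mul, _root_.abs_of_pos (Real.exp_pos _), hcos k, abs_mul, habsz k, one_mul]
  have hsw : Summable w := by
    apply hgau.of_norm_bounded
    intro k
    rw [Real.norm_eq_abs, hwabs k]
    calc Real.exp (-(Real.pi/a)*((k:ℝ)-1/2)^2) * |Real.sin ((2*(k:ℝ)-1)*(Real.pi*t))|
        ≤ Real.exp (-(Real.pi/a)*((k:ℝ)-1/2)^2) * 1 :=
          mul_le_mul_of_nonneg_left (abs_le.mpr ⟨Real.neg_one_le_sin _, Real.sin_le_one _⟩) (Real.exp_nonneg _)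
    _ = _ := mul_one _
  have hsw1 : Summable (fun m : ℕ => w (m:ℤ)) :=
    hsw.comp_injective (fun p q h => by exact_mod_cast h)
  have hsw2 : Summable (fun m : ℕ => w (-((m:ℤ)+1))) :=
    hsw.comp_injective (fun p q h => by omega)
  have hπa3 : (3:ℝ) ≤ Real.pi/a := by
    rw [le_div_iff₀ ha0]
    nlinarith
  have hq9 : (0:ℝ) ≤ 3*Real.exp (-9) := by positivity
  have hexp3 : (6:ℝ) < Real.exp 3 := by
    have h1 : Real.exp 3 = (Real.exp 1)^3 := by
      rw [← Real.exp_nat_mul]; norm_num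
    have h2 : (2.7:ℝ) < Real.exp 1 := by nlinarith [Real.exp_one_gt_d9]
    have h3 : (2.7:ℝ)^2 < (Real.exp 1)^2 := by nlinarith [h2]
    nlinarith [h1, h2, h3, Real.exp_pos 1]
  have hq9half : 3*Real.exp (-9) ≤ 1/2 := by
    have hm : Real.exp (-9) ≤ Real.exp (-3) := Real.exp_le_exp.mpr (by norm_num)
    have h3 : Real.exp (-3) = (Real.exp 3)⁻¹ := Real.exp_neg 3
    have hEinv : Real.exp 3 * (Real.exp 3)⁻¹ = 1 := mul_inv_cancel₀ (ne_of_gt (Real.exp_pos 3))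
    have : Real.exp (-3) ≤ 1/6 := by
      rw [h3]
      nlinarith [hexp3, hEinv, inv_pos.mpr (Real.exp_pos 3)]
    linarith
  have he6 : (36:ℝ) < Real.exp 6 := by
    have h1 : Real.exp 6 = (Real.exp 3)^2 := by
      rw [← Real.exp_nat_mul]; norm_num
    nlinarith [hexp3, Real.exp_pos 3]
  have he6' : Real.exp (-6) = (Real.exp 6)⁻¹ := Real.exp_neg 6
  have h12 : 12*Real.exp (-6) < 1 := by
    have hEinv : Real.exp 6 * (Real.exp 6)⁻¹ = 1 := mul_inv_cancel₀ (ne_of_gt (Real.exp_pos 6))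
    rw [he6']
    nlinarith [he6, hEinv, inv_pos.mpr (Real.exp_pos 6)]
  set A : ℝ := Real.sin (Real.pi*t) * Real.exp (-(Real.pi/a)*(1/4)) * (3*Real.exp (-6)) with hA
  have hApos : 0 < A := by
    rw [hA]; positivity
  have hπt0 : 0 ≤ Real.pi*t := by positivity
  have hπt1 : Real.pi*t ≤ Real.pi := by nlinarith [Real.pi_pos]
  have hkb : ∀ (m : ℕ) (k : ℤ), ((k:ℝ)-1/2)^2 = ((m:ℝ)+3/2)^2 →
      |Real.sin ((2*(k:ℝ)-1)*(Real.pi*t))| ≤ (2*(m:ℝ)+3) * Real.sin (Real.pi*t) →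
      |w k| ≤ A * (3*Real.exp (-9))^m := by
    intro m k hk1 hk2
    rw [hwabs k, hk1]
    have h0 : (0:ℝ) ≤ (m:ℝ) := Nat.cast_nonneg m
    have hEb : Real.exp (-(Real.pi/a)*(((m:ℝ)+3/2)^2))
        ≤ Real.exp (-(Real.pi/a)*(1/4)) * Real.exp (-(9*(m:ℝ)+6)) := by
      rw [← Real.exp_add, Real.exp_le_exp]
      nlinarith [hπa3, h0, mul_nonneg (by linarith : (0:ℝ) ≤ Real.pi/a - 3)
        (by nlinarith : (0:ℝ) ≤ (m:ℝ)^2 + 3*(m:ℝ) + 2),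
        mul_nonneg h0 h0]
    have hsplit9 : Real.exp (-(9*(m:ℝ)+6)) = Real.exp (-6) * (Real.exp (-9))^m := by
      rw [← Real.exp_nat_mul, ← Real.exp_add]
      congr 1
      push_cast
      ring
    have h23 := two_mul_add_three_le m
    calc Real.exp (-(Real.pi/a)*(((m:ℝ)+3/2)^2)) * |Real.sin ((2*(k:ℝ)-1)*(Real.pi*t))|
        ≤ (Real.exp (-(Real.pi/a)*(1/4)) * Real.exp (-(9*(m:ℝ)+6)))
          * ((2*(m:ℝ)+3) * Real.sin (Real.pi*t)) :=
          mul_le_mul hEb hk2 (abs_nonneg _) (by positivity)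
    _ ≤ (Real.exp (-(Real.pi/a)*(1/4)) * Real.exp (-(9*(m:ℝ)+6)))
          * ((3*3^m) * Real.sin (Real.pi*t)) := by
          apply mul_le_mul_of_nonneg_left _ (by positivity)
          exact mul_le_mul_of_nonneg_right h23 hsin.le
    _ = A * (3*Real.exp (-9))^m := by
          rw [hA, hsplit9, mul_pow]
          ring
  obtain ⟨hsu1, hsa1, htb1⟩ := geom_tail_bound (u := fun m : ℕ => w ((m:ℤ)+2))
    (A := A) (q := 3*Real.exp (-9)) hApos.le hq9 (by linarith)
    (fun m => by
      apply hkb m ((m:ℤ)+2) (by push_cast; ring)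
      have hnat := abs_sin_nat_mul_le (2*m+3) (Real.pi*t) hπt0 hπt1
      push_cast at hnat ⊢
      calc |Real.sin ((2*((m:ℝ)+2)-1)*(Real.pi*t))|
          = |Real.sin ((2*(m:ℝ)+3)*(Real.pi*t))| := by ring_nf
      _ ≤ (2*(m:ℝ)+3) * Real.sin (Real.pi*t) := by linarith [hnat]
      )
  obtain ⟨hsu2, hsa2, htb2⟩ := geom_tail_bound (u := fun m : ℕ => w (-((m:ℤ)+1)))
    (A := A) (q := 3*Real.exp (-9)) hApos.le hq9 (by linarith)
    (fun m => by
      apply hkb m (-((m:ℤ)+1)) (by push_cast; ring)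
      have hnat := abs_sin_nat_mul_le (2*m+3) (Real.pi*t) hπt0 hπt1
      push_cast at hnat ⊢
      calc |Real.sin ((2*(-((m:ℝ)+1))-1)*(Real.pi*t))|
          = |Real.sin (-((2*(m:ℝ)+3)*(Real.pi*t)))| := by ring_nf
      _ = |Real.sin ((2*(m:ℝ)+3)*(Real.pi*t))| := by rw [Real.sin_neg, abs_neg]
      _ ≤ (2*(m:ℝ)+3) * Real.sin (Real.pi*t) := by linarith [hnat]
      )
  have hw0 : w (0:ℤ) = Real.exp (-(Real.pi/a)*(1/4)) * Real.sin (Real.pi*t) := by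
    rw [hw]
    simp only []
    rw [hcos 0, zpow_zero, one_mul]
    push_cast
    rw [show (2*(0:ℝ)-1)*(Real.pi*t) = -(Real.pi*t) from by ring, Real.sin_neg]
    norm_num
  have hw1 : w (1:ℤ) = Real.exp (-(Real.pi/a)*(1/4)) * Real.sin (Real.pi*t) := by
    rw [hw]
    simp only []
    rw [hcos 1, zpow_one]
    push_cast
    rw [show (2*(1:ℝ)-1)*(Real.pi*t) = Real.pi*t from by ring]
    norm_num
  have hsw1' : Summable (fun m : ℕ => w ((m:ℤ)+1)) := by
    have h := (summable_nat_add_iff 1).mpr hsw1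
    exact h.congr (fun m => congrArg w (by push_cast; ring))
  have split1 : ∑' m : ℕ, w (m:ℤ) = w 0 + w 1 + ∑' m : ℕ, w ((m:ℤ)+2) := by
    rw [Summable.tsum_eq_zero_add hsw1]
    have e1 : ∑' (b:ℕ), w (((b+1:ℕ)):ℤ) = ∑' (b:ℕ), w ((b:ℤ)+1) :=
      tsum_congr fun b => congrArg w (by push_cast; ring)
    rw [e1, Summable.tsum_eq_zero_add hsw1']
    have e3 : ∑' (b:ℕ), w ((((b+1:ℕ)):ℤ)+1) = ∑' (b:ℕ), w ((b:ℤ)+2) :=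
      tsum_congr fun b => congrArg w (by push_cast; ring)
    rw [e3]
    norm_num
    ring
  have hb1 : |∑' m : ℕ, w ((m:ℤ)+2)| ≤ A/(1 - 3*Real.exp (-9)) := by
    have hn := norm_tsum_le_tsum_norm (f := fun m : ℕ => w ((m:ℤ)+2))
      (hsa1.congr (fun m => (Real.norm_eq_abs _).symm))
    rw [Real.norm_eq_abs] at hn
    refine le_trans hn (le_trans (le_of_eq (tsum_congr fun m => Real.norm_eq_abs _)) htb1)
  have hb2 : |∑' m : ℕ, w (-((m:ℤ)+1))| ≤ A/(1 - 3*Real.exp (-9)) := by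
    have hn := norm_tsum_le_tsum_norm (f := fun m : ℕ => w (-((m:ℤ)+1)))
      (hsa2.congr (fun m => (Real.norm_eq_abs _).symm))
    rw [Real.norm_eq_abs] at hn
    refine le_trans hn (le_trans (le_of_eq (tsum_congr fun m => Real.norm_eq_abs _)) htb2)
  have hAq : A/(1 - 3*Real.exp (-9)) ≤ 2*A := by
    rw [div_le_iff₀ (by linarith : (0:ℝ) < 1 - 3*Real.exp (-9))]
    nlinarith [hApos, hq9]
  have hfinal : 4*A < 2*(Real.exp (-(Real.pi/a)*(1/4)) * Real.sin (Real.pi*t)) := by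
    rw [hA]
    nlinarith [h12, hsin, Real.exp_pos (-(Real.pi/a)*(1/4)), Real.exp_pos (-6),
      mul_pos hsin (Real.exp_pos (-(Real.pi/a)*(1/4)))]
  rw [tsum_of_nat_of_neg_add_one hsw1 hsw2, split1, hw0, hw1]
  have hx1 := (abs_le.mp hb1).1
  have hx2 := (abs_le.mp hb2).1
  linarith


/-- Lemma 5.3. -/
theorem lemma_5_3 (a x : ℝ) (ha : 0 < a) (hx0 : 0 < x) (hxa : x < a) :
    ∃ r : ℝ, 0 < r ∧
      Complex.I * theta11 (Complex.I * (x : ℂ)) (Complex.I * (a : ℂ)) = (r : ℂ) := by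
  refine ⟨∑' n : ℤ, Tterm a x n, ?_, theta_reduction a x⟩
  by_cases hc : a ≤ 1
  · exact pos_dual a x ha hc hx0 hxa
  · push_neg at hc
    by_cases hc2 : 2*x ≤ a
    · exact pos_direct a x hc.le hx0 hc2
    · push_neg at hc2
      have hy0 : 0 < a - x := by linarith
      have hy2 : 2*(a-x) ≤ a := by linarith
      have hpos := pos_direct a (a-x) hc.le hy0 hy2
      have hsym := T_symm a (a-x)
      rw [show a - (a - x) = x from by ring] at hsym
      rw [hsym]
      exact mul_pos (Real.exp_pos _) hpos
end
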